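/- arXiv:2406.09101 — 2 statements merged into one kernel-verified Lean document; each statement's English description precedes it below -/
import Mathlib

section
/- Let X and Y be real Banach spaces, let r : X → Y be a continuously differentiable (C¹) map, and let H : X → ℝ be a C¹ functional. Suppose that for each x with r(x) = 0 the Fréchet derivative D_x r : X → Y is a surjective continuous linear map. If x₀ satisfies r(x₀) = 0 and D_{x₀}H[v] = 0 for every v in the kernel of D_{x₀}r, then there exists a continuous linear functional λ : Y → ℝ such that D_{x₀}H[v] = λ(D_{x₀}r[v]) for all v ∈ X. -/
/-- **Lagrange multipliers for Banach spaces.**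
Let `X` and `Y` be real Banach spaces, `r : X → Y` a `C¹` map and `H : X → ℝ` a `C¹`
functional. Suppose that at each zero of `r` the Fréchet derivative of `r` is surjective.
If `x₀` is a zero of `r` and the derivative of `H` at `x₀` vanishes on the kernel of the
derivative of `r` at `x₀`, then there is a continuous linear functional `Λ : Y →L[ℝ] ℝ` with
`D H x₀ v = Λ (D r x₀ v)` for all `v`. -/
theorem lagrange_multipliers_banach
    {X Y : Type*} [NormedAddCommGroup X] [NormedSpace ℝ X] [CompleteSpace X]
    [NormedAddCommGroup Y] [NormedSpace ℝ Y] [CompleteSpace Y]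
    (r : X → Y) (H : X → ℝ)
    (hr : ContDiff ℝ 1 r) (hH : ContDiff ℝ 1 H)
    (hsurj : ∀ x : X, r x = 0 → Function.Surjective (fderiv ℝ r x))
    (x₀ : X) (hx₀ : r x₀ = 0)
    (hker : ∀ v : X, fderiv ℝ r x₀ v = 0 → fderiv ℝ H x₀ v = 0) :
    ∃ Λ : Y →L[ℝ] ℝ, ∀ v : X, fderiv ℝ H x₀ v = Λ (fderiv ℝ r x₀ v) := by
  set D : X →L[ℝ] Y := fderiv ℝ r x₀ with hD
  set φ : X →L[ℝ] ℝ := fderiv ℝ H x₀ with hφ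
  have hDsurj : Function.Surjective D := hsurj x₀ hx₀
  have hkle : LinearMap.ker (D : X →ₗ[ℝ] Y) ≤ LinearMap.ker (φ : X →ₗ[ℝ] ℝ) := by
    intro v hv
    exact hker v hv
  -- linear factorization through the quotient
  let e := (D : X →ₗ[ℝ] Y).quotKerEquivOfSurjective hDsurj
  let Λ₀ : Y →ₗ[ℝ] ℝ :=
    ((LinearMap.ker (D : X →ₗ[ℝ] Y)).liftQ (φ : X →ₗ[ℝ] ℝ) hkle) ∘ₗ (e.symm : Y →ₗ[ℝ] _)
  have hfact : ∀ v : X, Λ₀ (D v) = φ v := by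
    intro v
    have h1 : e (Submodule.Quotient.mk v) = D v := rfl
    have h2 : e.symm (D v) = Submodule.Quotient.mk v := by
      rw [← h1, LinearEquiv.symm_apply_apply]
    show ((LinearMap.ker (D : X →ₗ[ℝ] Y)).liftQ (φ : X →ₗ[ℝ] ℝ) hkle) (e.symm (D v)) = φ v
    rw [h2]
    rfl
  -- continuity via the open mapping theorem
  have hopen : IsOpenMap D := D.isOpenMap hDsurj
  have hquot := hopen.isQuotientMap D.continuous hDsurj
  have hcont : Continuous Λ₀ := by
    rw [hquot.continuous_iff]
    have : (Λ₀ ∘ D) = φ := funext hfact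
    rw [this]
    exact φ.continuous
  exact ⟨⟨Λ₀, hcont⟩, fun v => (hfact v).symm⟩
end

section
/- Let n ≥ 3 be an integer. Then for every real number a with −1 ≤ a ≤ 1, the cubic p(a) = −(1/4)a³ + (1 − n/4)a² + 2(n − 1)a + 3(1 − n) satisfies p(a) < 0. -/
/-- For `n ≥ 3` and every `a ∈ [−1, 1]`, the cubic
`p(a) = −(1/4)a³ + (1 − n/4)a² + 2(n − 1)a + 3(1 − n)` is negative. -/
theorem p_neg_on_interval (n : ℕ) (hn : 3 ≤ n) (a : ℝ) (ha : -1 ≤ a) (ha' : a ≤ 1) :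
    -(1 / 4) * a ^ 3 + (1 - (n : ℝ) / 4) * a ^ 2
        + 2 * ((n : ℝ) - 1) * a + 3 * (1 - (n : ℝ)) < 0 := by
  have hn' : (3 : ℝ) ≤ n := by exact_mod_cast hn
  nlinarith [mul_nonneg (sub_nonneg.2 ha') (sub_nonneg.2 ha'), sq_nonneg (a - 1),
    sq_nonneg (a + 1), mul_nonneg (mul_nonneg (sub_nonneg.2 ha') (sub_nonneg.2 ha'))
    (neg_le_iff_add_nonneg.1 ha), sq_nonneg a,
    mul_nonneg (sub_nonneg.2 ha') (neg_le_iff_add_nonneg.1 ha),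
    mul_nonneg (sq_nonneg (a - 1)) (sub_nonneg.2 hn')]
end
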